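/- There is an explicit bijection between k_t-Dyck paths of length (k+1)n (for 0 ≤ t ≤ k) and k-Dyck paths of length (k+1)n + t that end at height t and stay weakly above 0, given by shifting the path up by t and prepending t up-steps. -/

import Mathlib

/-- Total displacement of a path encoded as a list of booleans (`true` = up-step `+1`,
`false` = down-step `-k`). -/
def stepsSum (k : ℕ) (l : List Bool) : ℤ :=
  (l.map fun b => if b then (1 : ℤ) else -(k : ℤ)).sum

lemma stepsSum_append (k : ℕ) (a b : List Bool) :
    stepsSum k (a ++ b) = stepsSum k a + stepsSum k b := by
  simp [stepsSum]

lemma stepsSum_replicate (k t : ℕ) : stepsSum k (List.replicate t true) = t := by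
  simp [stepsSum]

lemma take_eq_replicate (k t : ℕ) (ht : t ≤ k) (p : List Bool)
    (hlen : t ≤ p.length)
    (hpre : ∀ q, q <+: p → 0 ≤ stepsSum k q) :
    p.take t = List.replicate t true := by
  suffices h : ∀ i, i ≤ t → p.take i = List.replicate i true from h t le_rfl
  intro i hi
  induction i with
  | zero => simp
  | succ j ihj =>
    have hj := ihj (Nat.le_of_succ_le hi)
    have hjl : j < p.length :=
      lt_of_lt_of_le (Nat.lt_of_lt_of_le (Nat.lt_succ_self j) hi) hlen
    have hstep : p.take (j+1) = p.take j ++ [p.get ⟨j, hjl⟩] := by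
      rw [← List.take_concat_get hjl, List.concat_eq_append]; simp [List.get_eq_getElem]
    have hb : p.get ⟨j, hjl⟩ = true := by
      by_contra hfalse
      have hb' : p.get ⟨j, hjl⟩ = false := by
        simpa using hfalse
      have h0 : 0 ≤ stepsSum k (p.take (j+1)) :=
        hpre _ (List.take_prefix _ _)
      rw [hstep, stepsSum_append, hj, stepsSum_replicate, hb'] at h0
      simp [stepsSum] at h0
      have hjk : j < k := lt_of_lt_of_le (Nat.lt_of_lt_of_le (Nat.lt_succ_self j) hi) ht
      omega
    rw [hstep, hj, hb, List.replicate_succ']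

theorem stmt_11 (k t n : ℕ) (hk : 0 < k) (ht : t ≤ k) :
    ∃ e : {p : List Bool // p.length = (k + 1) * n ∧ stepsSum k p = 0 ∧
            ∀ q, q <+: p → -(t : ℤ) ≤ stepsSum k q} ≃
          {p : List Bool // p.length = (k + 1) * n + t ∧ stepsSum k p = t ∧
            ∀ q, q <+: p → 0 ≤ stepsSum k q},
      ∀ p, (e p).val = List.replicate t true ++ p.val := by
  have hdecomp : ∀ p : {p : List Bool // p.length = (k + 1) * n + t ∧ stepsSum k p = t ∧
            ∀ q, q <+: p → 0 ≤ stepsSum k q},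
      p.val = List.replicate t true ++ p.val.drop t := by
    rintro ⟨p, hlen, hsum, hpre⟩
    have h1 : t ≤ p.length := by omega
    show p = List.replicate t true ++ p.drop t
    conv_lhs => rw [← List.take_append_drop t p]
    rw [take_eq_replicate k t ht p h1 hpre]
  refine ⟨⟨fun p => ⟨List.replicate t true ++ p.val, ?_, ?_, ?_⟩,
          fun p => ⟨p.val.drop t, ?_, ?_, ?_⟩, ?_, ?_⟩, fun p => rfl⟩
  · simp [p.2.1]; ring
  · rw [stepsSum_append, stepsSum_replicate, p.2.2.1]; ring
  · intro q hq
    rcases List.prefix_or_prefix_of_prefix hq (List.prefix_append _ _) with h | h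
    · obtain ⟨s, hs⟩ := h
      have hq' : q = List.replicate q.length true := by
        apply List.eq_replicate_length.mpr
        intro b hb
        have : b ∈ List.replicate t true := hs ▸ List.mem_append_left s hb
        exact List.eq_of_mem_replicate this
      rw [hq', stepsSum_replicate]
      positivity
    · obtain ⟨s, rfl⟩ := h
      have hs : s <+: p.val := by
        obtain ⟨r, hr⟩ := hq
        rw [List.append_assoc] at hr
        exact ⟨r, List.append_cancel_left hr⟩
      have := p.2.2.2 s hs
      rw [stepsSum_append, stepsSum_replicate]
      omega
  · simp [p.2.1]
  · have hd := hdecomp p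
    have := p.2.2.1
    rw [hd, stepsSum_append, stepsSum_replicate] at this
    omega
  · intro q hq
    obtain ⟨r, hr⟩ := hq
    have hq' : List.replicate t true ++ q <+: p.val := by
      rw [hdecomp p, ← hr]
      exact ⟨r, by rw [List.append_assoc]⟩
    have := p.2.2.2 _ hq'
    rw [stepsSum_append, stepsSum_replicate] at this
    omega
  · intro p
    ext1
    simp
  · intro p
    ext1
    exact (hdecomp p).symm
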